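/- There exist constants K > 0 and K' > 0 depending only on d such that for every measurable function F : X × ℝ^d → [0,∞), one has ∫_X (∫_{ℝ^d} F(x,v) dv)² dμ(x) ≤ K ∫_X ∫_{ℝ^d} |v|^{3d/2} F(x,v) dv dμ(x) + K' ∫_X ∫_{ℝ^d} F(x,v)⁴ dv dμ(x) (an inequality in [0,∞]). -/

import Mathlib

open MeasureTheory ENNReal
section helpers
open Metric

noncomputable def Cd (d : ℕ) : ℝ≥0∞ :=
  (1 + (volume (ball (0 : EuclideanSpace ℝ (Fin d)) 1)) ^ ((3:ℝ)/4)) ^ 2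

lemma Cd_ne_top (d : ℕ) : Cd d ≠ ∞ := by
  have h : volume (ball (0 : EuclideanSpace ℝ (Fin d)) 1) ≠ ∞ := measure_ball_lt_top.ne
  have h1 : (volume (ball (0 : EuclideanSpace ℝ (Fin d)) 1)) ^ ((3:ℝ)/4) ≠ ∞ :=
    ENNReal.rpow_ne_top_of_nonneg (by norm_num) h
  have h2 : (1:ℝ≥0∞) + (volume (ball (0 : EuclideanSpace ℝ (Fin d)) 1)) ^ ((3:ℝ)/4) ≠ ∞ := by
    simp [ENNReal.add_ne_top, h1]
  exact ENNReal.pow_ne_top h2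

lemma Cd_ne_zero (d : ℕ) : Cd d ≠ 0 := by simp [Cd]

lemma key_lemma {d : ℕ} (hd : 1 ≤ d) (f : EuclideanSpace ℝ (Fin d) → ℝ≥0∞)
    (hf : Measurable f) :
    (∫⁻ v, f v) ^ 2 ≤
      Cd d * (∫⁻ v, (‖v‖₊ : ℝ≥0∞) ^ (3 * (d : ℝ) / 2) * f v) + Cd d * ∫⁻ v, f v ^ 4 := by
  have hd0 : 0 < d := hd
  have hdR : ((d:ℝ)) ≠ 0 := by positivity
  set α : ℝ := 3 * (d:ℝ) / 2 with hα
  have hαpos : 0 < α := by positivity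
  set B₁ := volume (ball (0 : EuclideanSpace ℝ (Fin d)) 1) with hB₁
  have hB₁t : B₁ ≠ ∞ := measure_ball_lt_top.ne
  set M := ∫⁻ v, (‖v‖₊ : ℝ≥0∞) ^ α * f v with hMdef
  set Q := ∫⁻ v, f v ^ 4 with hQdef
  have hmeasM : Measurable fun v : EuclideanSpace ℝ (Fin d) => (‖v‖₊ : ℝ≥0∞) ^ α * f v :=
    ((measurable_nnnorm.coe_nnreal_ennreal).pow_const _).mul hf
  -- case Q = 0
  rcases eq_or_ne Q 0 with hQ0 | hQ0
  · have hf0 : f =ᵐ[volume] 0 := by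
      have h := (lintegral_eq_zero_iff (hf.pow_const 4)).mp hQ0
      filter_upwards [h] with v hv
      simpa [pow_eq_zero_iff] using hv
    have hA : (∫⁻ v, f v) = 0 := by rw [lintegral_congr_ae hf0]; simp
    simp [hA]
  -- case M = 0
  rcases eq_or_ne M 0 with hM0 | hM0
  · haveI : Nonempty (Fin d) := ⟨⟨0, hd0⟩⟩
    haveI : Nontrivial (EuclideanSpace ℝ (Fin d)) := by
      refine ⟨0, EuclideanSpace.single ⟨0, hd0⟩ 1, fun h => ?_⟩
      have := congrArg (fun x => x ⟨0, hd0⟩) h.symm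
      simp [EuclideanSpace.single_apply] at this
    have hf0 : f =ᵐ[volume] 0 := by
      have h1 := (lintegral_eq_zero_iff hmeasM).mp hM0
      have h2 : ∀ᵐ v : EuclideanSpace ℝ (Fin d) ∂volume, v ≠ 0 := by
        rw [ae_iff]
        simpa using measure_singleton (0 : EuclideanSpace ℝ (Fin d))
      filter_upwards [h1, h2] with v hv hv0
      have hn : (‖v‖₊ : ℝ≥0∞) ^ α ≠ 0 := by
        simp [ENNReal.rpow_eq_zero_iff, nnnorm_eq_zero, hv0, hαpos, not_lt.mpr hαpos.le]
      simpa [hn] using hv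
    have hA : (∫⁻ v, f v) = 0 := by rw [lintegral_congr_ae hf0]; simp
    simp [hA]
  -- case M = ∞
  rcases eq_or_ne M ∞ with hMt | hMt
  · have h : Cd d * M = ∞ := by rw [hMt]; exact ENNReal.mul_top (Cd_ne_zero d)
    simp [h]
  rcases eq_or_ne Q ∞ with hQt | hQt
  · have h : Cd d * Q = ∞ := by rw [hQt]; exact ENNReal.mul_top (Cd_ne_zero d)
    simp [h]
  -- main case
  set u : ℝ := 4 / (9 * (d:ℝ)) with hu
  set w : ℝ := -(1 / (9 * (d:ℝ))) with hw
  have hMu : M ^ u ≠ ∞ := by simp [ENNReal.rpow_eq_top_iff, hM0, hMt]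
  have hQw : Q ^ w ≠ ∞ := by simp [ENNReal.rpow_eq_top_iff, hQ0, hQt]
  set s : ℝ≥0∞ := M ^ u * Q ^ w with hs
  have hs0 : s ≠ 0 := by
    simp [hs, mul_eq_zero, ENNReal.rpow_eq_zero_iff, hM0, hMt, hQ0, hQt]
  have hst : s ≠ ∞ := ENNReal.mul_ne_top hMu hQw
  have hsα0 : s ^ α ≠ 0 := by simp [ENNReal.rpow_eq_zero_iff, hs0, hst]
  have hsαt : s ^ α ≠ ∞ := by simp [ENNReal.rpow_eq_top_iff, hs0, hst]
  have hsnα : s ^ (-α) ≠ ∞ := by simp [ENNReal.rpow_eq_top_iff, hs0, hst, not_lt.mpr hαpos.le]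
  set R : ℝ := s.toReal with hRdef
  have hRpos : 0 < R := ENNReal.toReal_pos hs0 hst
  have hsR : ENNReal.ofReal R = s := ENNReal.ofReal_toReal hst
  have hBmeas : MeasurableSet (closedBall (0 : EuclideanSpace ℝ (Fin d)) R) :=
    measurableSet_closedBall
  -- tail bound
  have tail : (∫⁻ v in (closedBall (0 : EuclideanSpace ℝ (Fin d)) R)ᶜ, f v) ≤ s ^ (-α) * M := by
    have step : (∫⁻ v in (closedBall (0 : EuclideanSpace ℝ (Fin d)) R)ᶜ, f v)
        ≤ ∫⁻ v in (closedBall (0 : EuclideanSpace ℝ (Fin d)) R)ᶜ,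
            s ^ (-α) * ((‖v‖₊ : ℝ≥0∞) ^ α * f v) := by
      refine setLIntegral_mono (hmeasM.const_mul _) ?_
      intro v hv
      have hvR : R ≤ ‖v‖ := by
        have : ¬ dist v 0 ≤ R := hv
        rw [dist_zero_right] at this
        linarith [not_le.mp this]
      have h1 : s ≤ (‖v‖₊ : ℝ≥0∞) := by
        rw [← hsR, ← ENNReal.ofReal_coe_nnreal, coe_nnnorm]
        exact ENNReal.ofReal_le_ofReal hvR
      have h2 : s ^ α ≤ (‖v‖₊ : ℝ≥0∞) ^ α := ENNReal.rpow_le_rpow h1 hαpos.le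
      calc f v = (s ^ (-α) * s ^ α) * f v := by
            rw [ENNReal.rpow_neg, ENNReal.inv_mul_cancel hsα0 hsαt, one_mul]
        _ ≤ (s ^ (-α) * (‖v‖₊ : ℝ≥0∞) ^ α) * f v := by gcongr
        _ = s ^ (-α) * ((‖v‖₊ : ℝ≥0∞) ^ α * f v) := by ring
    refine step.trans ?_
    rw [lintegral_const_mul' _ _ hsnα]
    exact mul_le_mul_right (setLIntegral_le_lintegral _ _) _
  -- ball bound
  have ball_bd : (∫⁻ v in closedBall (0 : EuclideanSpace ℝ (Fin d)) R, f v)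
      ≤ B₁ ^ ((3:ℝ)/4) * (s ^ (3 * (d:ℝ) / 4) * Q ^ ((1:ℝ)/4)) := by
    have hpq : Real.HolderConjugate (4/3) 4 := Real.holderConjugate_iff.mpr ⟨by norm_num, by norm_num⟩
    have hold := ENNReal.lintegral_mul_le_Lp_mul_Lq
      (volume.restrict (closedBall (0 : EuclideanSpace ℝ (Fin d)) R)) hpq
      (aemeasurable_const (b := (1:ℝ≥0∞))) hf.aemeasurable
    simp only [Pi.mul_apply, one_mul, ENNReal.one_rpow] at hold
    have hvol : volume (closedBall (0 : EuclideanSpace ℝ (Fin d)) R)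
        = s ^ ((d:ℝ)) * B₁ := by
      rw [Measure.addHaar_closedBall _ _ hRpos.le, finrank_euclideanSpace_fin,
        ENNReal.ofReal_pow hRpos.le, hsR, ← ENNReal.rpow_natCast]
    have h14 : (∫⁻ v in closedBall (0 : EuclideanSpace ℝ (Fin d)) R, f v ^ (4:ℝ)) ^ ((1:ℝ)/4)
        ≤ Q ^ ((1:ℝ)/4) := by
      refine ENNReal.rpow_le_rpow ?_ (by norm_num)
      rw [hQdef]
      calc (∫⁻ v in closedBall (0 : EuclideanSpace ℝ (Fin d)) R, f v ^ (4:ℝ))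
          ≤ ∫⁻ v, f v ^ (4:ℝ) := setLIntegral_le_lintegral _ _
        _ = ∫⁻ v, f v ^ 4 := by
            refine lintegral_congr fun v => ?_
            rw [show (4:ℝ) = ((4:ℕ):ℝ) by norm_num, ENNReal.rpow_natCast]
    calc (∫⁻ v in closedBall (0 : EuclideanSpace ℝ (Fin d)) R, f v)
        ≤ (∫⁻ _ in closedBall (0 : EuclideanSpace ℝ (Fin d)) R, (1:ℝ≥0∞) ^ (4/3:ℝ)) ^ (1/(4/3:ℝ))
          * (∫⁻ v in closedBall (0 : EuclideanSpace ℝ (Fin d)) R, f v ^ (4:ℝ)) ^ (1/(4:ℝ)) := by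
          simpa using hold
      _ ≤ (s ^ ((d:ℝ)) * B₁) ^ ((3:ℝ)/4) * Q ^ ((1:ℝ)/4) := by
          rw [show (1:ℝ≥0∞) ^ (4/3:ℝ) = 1 from ENNReal.one_rpow _]
          rw [setLIntegral_one, hvol]
          rw [show (1/(4/3:ℝ)) = (3:ℝ)/4 by norm_num, show (1/(4:ℝ)) = (1:ℝ)/4 by norm_num]
          exact mul_le_mul_right h14 _
      _ = B₁ ^ ((3:ℝ)/4) * (s ^ (3 * (d:ℝ) / 4) * Q ^ ((1:ℝ)/4)) := by
          rw [ENNReal.mul_rpow_of_nonneg _ _ (by norm_num : (0:ℝ) ≤ 3/4),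
            ← ENNReal.rpow_mul]
          ring_nf
  -- combine
  have hsplit : (∫⁻ v, f v) =
      (∫⁻ v in closedBall (0 : EuclideanSpace ℝ (Fin d)) R, f v)
      + (∫⁻ v in (closedBall (0 : EuclideanSpace ℝ (Fin d)) R)ᶜ, f v) :=
    (lintegral_add_compl f hBmeas).symm
  have hMQrw : ∀ y : ℝ, s ^ y = M ^ (u * y) * Q ^ (w * y) := by
    intro y
    rw [hs, ENNReal.mul_rpow_of_ne_top hMu hQw, ← ENNReal.rpow_mul, ← ENNReal.rpow_mul]
  have e1 : s ^ (-α) * M = M ^ ((1:ℝ)/3) * Q ^ ((1:ℝ)/6) := by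
    rw [hMQrw]
    have h1 : u * (-α) = -(2/3 : ℝ) := by rw [hu, hα]; field_simp; ring
    have h2 : w * (-α) = (1/6 : ℝ) := by rw [hw, hα]; field_simp; ring
    rw [h1, h2]
    calc M ^ (-(2/3:ℝ)) * Q ^ ((1:ℝ)/6) * M
        = (M ^ (-(2/3:ℝ)) * M ^ ((1:ℝ))) * Q ^ ((1:ℝ)/6) := by rw [ENNReal.rpow_one]; ring
      _ = M ^ ((1:ℝ)/3) * Q ^ ((1:ℝ)/6) := by
          rw [← ENNReal.rpow_add _ _ hM0 hMt]; norm_num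
  have e2 : s ^ (3 * (d:ℝ) / 4) * Q ^ ((1:ℝ)/4) = M ^ ((1:ℝ)/3) * Q ^ ((1:ℝ)/6) := by
    rw [hMQrw]
    have h1 : u * (3 * (d:ℝ) / 4) = (1/3 : ℝ) := by rw [hu]; field_simp; ring
    have h2 : w * (3 * (d:ℝ) / 4) = -(1/12 : ℝ) := by rw [hw]; field_simp; ring
    rw [h1, h2]
    calc M ^ ((1:ℝ)/3) * Q ^ (-(1/12:ℝ)) * Q ^ ((1:ℝ)/4)
        = M ^ ((1:ℝ)/3) * (Q ^ (-(1/12:ℝ)) * Q ^ ((1:ℝ)/4)) := by ring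
      _ = M ^ ((1:ℝ)/3) * Q ^ ((1:ℝ)/6) := by
          rw [← ENNReal.rpow_add _ _ hQ0 hQt]; norm_num
  set G := M ^ ((1:ℝ)/3) * Q ^ ((1:ℝ)/6) with hG
  have hA : (∫⁻ v, f v) ≤ (1 + B₁ ^ ((3:ℝ)/4)) * G := by
    rw [hsplit]
    calc _ ≤ (B₁ ^ ((3:ℝ)/4) * (s ^ (3 * (d:ℝ) / 4) * Q ^ ((1:ℝ)/4))) + s ^ (-α) * M :=
          add_le_add ball_bd tail
      _ = (1 + B₁ ^ ((3:ℝ)/4)) * G := by rw [e1, e2, hG]; ring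
  have hCd : Cd d = (1 + B₁ ^ ((3:ℝ)/4)) ^ 2 := rfl
  have hG2 : G ^ 2 ≤ M + Q := by
    have hGe : G ^ 2 = M ^ ((2:ℝ)/3) * Q ^ ((1:ℝ)/3) := by
      rw [hG, mul_pow, ← ENNReal.rpow_natCast (M ^ ((1:ℝ)/3)) 2,
        ← ENNReal.rpow_natCast (Q ^ ((1:ℝ)/6)) 2, ← ENNReal.rpow_mul, ← ENNReal.rpow_mul]
      norm_num
    have hMQ0 : M + Q ≠ 0 := by simp [hM0]
    have hMQt : M + Q ≠ ∞ := ENNReal.add_ne_top.mpr ⟨hMt, hQt⟩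
    rw [hGe]
    calc M ^ ((2:ℝ)/3) * Q ^ ((1:ℝ)/3)
        ≤ (M + Q) ^ ((2:ℝ)/3) * (M + Q) ^ ((1:ℝ)/3) :=
          mul_le_mul' (ENNReal.rpow_le_rpow le_self_add (by norm_num))
            (ENNReal.rpow_le_rpow le_add_self (by norm_num))
      _ = (M + Q) ^ ((1:ℝ)) := by rw [← ENNReal.rpow_add _ _ hMQ0 hMQt]; norm_num
      _ = M + Q := ENNReal.rpow_one _
  calc (∫⁻ v, f v) ^ 2 ≤ ((1 + B₁ ^ ((3:ℝ)/4)) * G) ^ 2 := by gcongr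
    _ = Cd d * G ^ 2 := by rw [hCd, mul_pow]
    _ ≤ Cd d * (M + Q) := mul_le_mul_right hG2 _
    _ = Cd d * M + Cd d * Q := mul_add _ _ _

end helpers

/-- There exist constants `K, K' > 0` depending only on `d` such that for every σ-finite
measure space `(X, μ)` and every measurable `F : X × ℝ^d → [0,∞)`, the squared `L²` norm of
the marginal `F⁰(x) = ∫ F(x,v) dv` is controlled by the `|v|^{3d/2}`-moment plus the `L⁴`
norm of `F` (an inequality in `[0,∞]`). -/
theorem marginal_L2_estimate (d : ℕ) (hd : 1 ≤ d) :
    ∃ K K' : ℝ, 0 < K ∧ 0 < K' ∧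
      ∀ (X : Type) (_ : MeasurableSpace X) (μ : Measure X), SigmaFinite μ →
        ∀ F : X × EuclideanSpace ℝ (Fin d) → NNReal, Measurable F →
          (∫⁻ x, (∫⁻ v, (F (x, v) : ℝ≥0∞)) ^ 2 ∂μ)
            ≤ ENNReal.ofReal K *
                (∫⁻ x, ∫⁻ v, (‖v‖₊ : ℝ≥0∞) ^ (3 * (d : ℝ) / 2) * (F (x, v) : ℝ≥0∞) ∂volume ∂μ)
              + ENNReal.ofReal K' *
                (∫⁻ x, ∫⁻ v, (F (x, v) : ℝ≥0∞) ^ 4 ∂volume ∂μ) := by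
  have hpos : 0 < (Cd d).toReal := ENNReal.toReal_pos (Cd_ne_zero d) (Cd_ne_top d)
  refine ⟨(Cd d).toReal, (Cd d).toReal, hpos, hpos, ?_⟩
  intro X mX μ hσ F hF
  have hCd : ENNReal.ofReal (Cd d).toReal = Cd d := ENNReal.ofReal_toReal (Cd_ne_top d)
  rw [hCd]
  have hFm : Measurable fun p : X × EuclideanSpace ℝ (Fin d) => (F p : ℝ≥0∞) :=
    hF.coe_nnreal_ennreal
  have hMmeas : Measurable fun x : X =>
      ∫⁻ v, (‖v‖₊ : ℝ≥0∞) ^ (3 * (d : ℝ) / 2) * (F (x, v) : ℝ≥0∞) := by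
    apply Measurable.lintegral_prod_right
      (f := fun x v => (‖v‖₊ : ℝ≥0∞) ^ (3 * (d : ℝ) / 2) * (F (x, v) : ℝ≥0∞))
    exact ((measurable_snd.nnnorm.coe_nnreal_ennreal).pow_const _).mul hFm
  have hQmeas : Measurable fun x : X => ∫⁻ v, (F (x, v) : ℝ≥0∞) ^ 4 := by
    apply Measurable.lintegral_prod_right (f := fun x v => (F (x, v) : ℝ≥0∞) ^ 4)
    exact hFm.pow_const _
  calc (∫⁻ x, (∫⁻ v, (F (x, v) : ℝ≥0∞)) ^ 2 ∂μ)
      ≤ ∫⁻ x, (Cd d * (∫⁻ v, (‖v‖₊ : ℝ≥0∞) ^ (3 * (d : ℝ) / 2) * (F (x, v) : ℝ≥0∞))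
          + Cd d * ∫⁻ v, (F (x, v) : ℝ≥0∞) ^ 4) ∂μ := by
        refine lintegral_mono fun x => ?_
        exact key_lemma hd (fun v => (F (x, v) : ℝ≥0∞)) (hFm.comp measurable_prodMk_left)
    _ = Cd d * (∫⁻ x, ∫⁻ v, (‖v‖₊ : ℝ≥0∞) ^ (3 * (d : ℝ) / 2) * (F (x, v) : ℝ≥0∞) ∂volume ∂μ)
        + Cd d * (∫⁻ x, ∫⁻ v, (F (x, v) : ℝ≥0∞) ^ 4 ∂volume ∂μ) := by
        rw [lintegral_add_left (hMmeas.const_mul _), lintegral_const_mul' _ _ (Cd_ne_top d),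
          lintegral_const_mul' _ _ (Cd_ne_top d)]
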